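/- Let φ be a 3-CNF formula with m clauses over n variables and f_φ its associated ReLU network. If a Boolean assignment s = (s_1, …, s_n) satisfies φ, and x ∈ {0,1}^n is defined by x_k = 1 if s_k is true and x_k = 0 otherwise, then f_φ(x) = 1. -/

import Mathlib

/-- The ReLU function `σ(t) = max(t, 0)`. -/
def relu (t : ℝ) : ℝ := max t 0

/-- A literal over `n` Boolean variables: a variable index together with a
negation flag (`neg = true` means the literal is `¬ s_var`). -/
structure Literal (n : ℕ) where
  var : Fin n
  neg : Bool

/-- A 3-CNF formula with `m` clauses over `n` variables: each clause consists of
three literals. -/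
def CNF3 (n m : ℕ) := Fin m → Fin 3 → Literal n

/-- A literal is satisfied by an assignment `s`. -/
def litSat {n : ℕ} (s : Fin n → Prop) (t : Literal n) : Prop :=
  if t.neg then ¬ s t.var else s t.var

/-- A clause (three literals) is satisfied by an assignment `s` if some literal
in it is satisfied. -/
def clauseSat {n : ℕ} (s : Fin n → Prop) (C : Fin 3 → Literal n) : Prop :=
  ∃ j, litSat s (C j)

/-- The value `z_{i,j}(x)`: `σ(2 x_k − 1)` for the literal `s_k` and
`σ(1 − 2 x_k)` for the literal `¬ s_k`. -/
def zval {n : ℕ} (t : Literal n) (x : Fin n → ℝ) : ℝ :=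
  if t.neg then relu (1 - 2 * x t.var) else relu (2 * x t.var - 1)

/-- The clause gadget
`f_i(x) = σ(z_{i,1} + z_{i,2} + z_{i,3}) − σ(z_{i,1} + z_{i,2} + z_{i,3} − 1)`. -/
noncomputable def clauseGadget {n : ℕ} (C : Fin 3 → Literal n) (x : Fin n → ℝ) : ℝ :=
  relu (∑ j, zval (C j) x) - relu ((∑ j, zval (C j) x) - 1)

/-- The ReLU network associated to a 3-CNF formula:
`f_φ(x) = σ((Σ_{i=1}^m f_i(x)) − m + 1)`. -/
noncomputable def cnfNet {n m : ℕ} (φ : CNF3 n m) (x : Fin n → ℝ) : ℝ :=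
  relu ((∑ i, clauseGadget (φ i) x) - m + 1)


open Classical in
lemma zval_eq {n : ℕ} (s : Fin n → Prop) (t : Literal n) (x : Fin n → ℝ)
    (hx : ∀ k, x k = if s k then 1 else 0) :
    zval t x = if litSat s t then 1 else 0 := by
  unfold zval litSat relu
  rw [hx t.var]
  by_cases hn : t.neg <;> by_cases hv : s t.var <;> simp [hn, hv] <;> norm_num

open Classical in
lemma gadget_eq_one {n : ℕ} (s : Fin n → Prop) (C : Fin 3 → Literal n)
    (hC : clauseSat s C) (x : Fin n → ℝ) (hx : ∀ k, x k = if s k then 1 else 0) :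
    clauseGadget C x = 1 := by
  obtain ⟨j, hj⟩ := hC
  have hz : ∀ j', zval (C j') x = if litSat s (C j') then 1 else 0 :=
    fun j' => zval_eq s (C j') x hx
  have hge : (1:ℝ) ≤ ∑ j', zval (C j') x := by
    have h1 : zval (C j) x = 1 := by rw [hz j]; simp [hj]
    calc (1:ℝ) = zval (C j) x := h1.symm
    _ ≤ ∑ j', zval (C j') x := by
        apply Finset.single_le_sum (f := fun j' => zval (C j') x) _ (Finset.mem_univ j)
        intro i _
        show (0:ℝ) ≤ zval (C i) x; rw [hz i]; positivity
  unfold clauseGadget relu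
  rw [max_eq_left (by linarith), max_eq_left (by linarith)]
  ring

open Classical in
/-- If a Boolean assignment `s` satisfies the 3-CNF formula
`φ`, and `x ∈ {0,1}^n` is the corresponding 0/1 vector (`x_k = 1` iff `s_k`
holds), then the associated ReLU network evaluates to `1` at `x`. -/
theorem cnf_net_eq_one_of_satisfying {n m : ℕ} (φ : CNF3 n m)
    (s : Fin n → Prop) (hs : ∀ i, clauseSat s (φ i))
    (x : Fin n → ℝ) (hx : ∀ k, x k = if s k then 1 else 0) :
    cnfNet φ x = 1 := by
  unfold cnfNet
  have h : ∀ i, clauseGadget (φ i) x = 1 := fun i => gadget_eq_one s (φ i) (hs i) x hx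
  rw [Finset.sum_congr rfl (fun i _ => h i)]
  simp [relu]
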